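/- For every real t > 0 and all real x, y, the following spectral-representation identity for Brownian motion on (-1,1) killed at both endpoints holds: (1/(2·√(2πt))) · ∑_{n∈ℤ} ( exp(-(x-y+4n)²/(2t)) - exp(-(x+y+4n+2)²/(2t)) ) = (1/2) · ∑_{n=1}^∞ exp(-n²π²t/8) · sin(nπ(x+1)/2) · sin(nπ(y+1)/2). -/

import Mathlib

open Real

lemma summable_gauss (t z : ℝ) (ht : 0 < t) :
    Summable fun n : ℤ => Real.exp (-(z + 4 * (n : ℝ)) ^ 2 / (2 * t)) := by
  have hπt : (0:ℝ) < π * t := mul_pos Real.pi_pos ht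
  rw [← Complex.summable_ofReal]
  have hsum : Summable fun n : ℤ =>
      Complex.exp ((-z ^ 2 / (2 * t) : ℝ)) * jacobiTheta₂_term n (((2 * z / (π * t) : ℝ)) * Complex.I)
        (((8 / (π * t) : ℝ)) * Complex.I) := by
    apply Summable.mul_left
    refine (summable_jacobiTheta₂_term_iff _ _).mpr ?_
    simp only [Complex.mul_I_im, Complex.ofReal_re]
    positivity
  refine hsum.congr fun n => ?_
  rw [jacobiTheta₂_term, ← Complex.exp_add, Complex.ofReal_exp]
  congr 1
  have hπ : (π:ℂ) ≠ 0 := Complex.ofReal_ne_zero.mpr Real.pi_ne_zero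
  have htC : (t:ℂ) ≠ 0 := Complex.ofReal_ne_zero.mpr ht.ne'
  push_cast
  field_simp
  ring_nf
  rw [Complex.I_sq]
  ring

lemma summable_ek (t : ℝ) (ht : 0 < t) :
    Summable fun k : ℤ => Real.exp (-(k : ℝ) ^ 2 * π ^ 2 * t / 8) := by
  rw [← Complex.summable_ofReal]
  have hsum : Summable fun k : ℤ =>
      jacobiTheta₂_term k 0 (((π * t / 8 : ℝ)) * Complex.I) := by
    refine (summable_jacobiTheta₂_term_iff _ _).mpr ?_
    simp only [Complex.mul_I_im, Complex.ofReal_re]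
    positivity
  refine hsum.congr fun k => ?_
  rw [jacobiTheta₂_term, Complex.ofReal_exp]
  congr 1
  push_cast
  ring_nf
  rw [Complex.I_sq]
  ring

lemma int_tsum_even (g : ℤ → ℝ) (hs : Summable g) (h0 : g 0 = 0)
    (he : ∀ k : ℤ, g (-k) = g k) :
    ∑' k : ℤ, g k = 2 * ∑' n : ℕ, g ((n : ℤ) + 1) := by
  have hnat : Summable fun n : ℕ => g n := hs.comp_injective (fun a b h => by omega)
  have hneg : Summable fun n : ℕ => g (-((n:ℤ) + 1)) := hs.comp_injective (fun a b h => by omega)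
  rw [tsum_of_nat_of_neg_add_one hnat hneg, Summable.tsum_eq_zero_add hnat]
  simp only [Nat.cast_zero, h0, zero_add]
  rw [tsum_congr (fun n : ℕ => he ((n:ℤ)+1))]
  have : (fun n : ℕ => g ((n:ℤ) + 1)) = fun n : ℕ => g ((n + 1 : ℕ) : ℤ) := by
    funext n; congr 1
  rw [this]
  ring

lemma poisson (t z : ℝ) (ht : 0 < t) :
    ∑' n : ℤ, Real.exp (-(z + 4 * (n : ℝ)) ^ 2 / (2 * t))
      = Real.sqrt (2 * π * t) / 4 *
        ∑' k : ℤ, Real.exp (-(k : ℝ) ^ 2 * π ^ 2 * t / 8) * Real.cos ((k : ℝ) * π * z / 2) := by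
  have hπt : (0:ℝ) < π * t := mul_pos Real.pi_pos ht
  have ha0 : (0:ℝ) < 8 / (π * t) := by positivity
  have hπ : (π:ℂ) ≠ 0 := Complex.ofReal_ne_zero.mpr Real.pi_ne_zero
  have htC : (t:ℂ) ≠ 0 := Complex.ofReal_ne_zero.mpr ht.ne'
  have haC : (0:ℝ) < ((8 / (π * t) : ℝ) : ℂ).re := by rwa [Complex.ofReal_re]
  have key := Complex.tsum_exp_neg_quadratic haC ((-2 * z / (π * t) : ℝ) : ℂ)
  have hL : ∀ n : ℤ, Complex.exp (-(π:ℂ) * ((8 / (π * t) : ℝ) : ℂ) * (n:ℂ) ^ 2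
        + 2 * (π:ℂ) * ((-2 * z / (π * t) : ℝ) : ℂ) * (n:ℂ))
      = Complex.exp ((z ^ 2 / (2 * t) : ℝ)) *
        ((Real.exp (-(z + 4 * (n : ℝ)) ^ 2 / (2 * t)) : ℝ) : ℂ) := by
    intro n
    rw [Complex.ofReal_exp, ← Complex.exp_add]
    congr 1
    push_cast
    field_simp
    ring
  have hR : ∀ k : ℤ, Complex.exp (-(π:ℂ) / ((8 / (π * t) : ℝ) : ℂ) *
        ((k:ℂ) + Complex.I * ((-2 * z / (π * t) : ℝ) : ℂ)) ^ 2)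
      = Complex.exp ((z ^ 2 / (2 * t) : ℝ)) *
        (((Real.exp (-(k : ℝ) ^ 2 * π ^ 2 * t / 8)) : ℂ) *
          Complex.exp (((k : ℝ) * π * z / 2 : ℝ) * Complex.I)) := by
    intro k
    simp only [Complex.ofReal_exp]
    rw [← Complex.exp_add, ← Complex.exp_add]
    congr 1
    push_cast
    field_simp
    ring_nf
    rw [Complex.I_sq]
    ring
  rw [tsum_congr hL, tsum_congr hR, tsum_mul_left, tsum_mul_left] at key
  have key2 : ((∑' n : ℤ, Real.exp (-(z + 4 * (n : ℝ)) ^ 2 / (2 * t)) : ℝ) : ℂ)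
      = 1 / (((8 / (π * t) : ℝ) : ℂ) ^ (1/2 : ℂ)) *
        ∑' k : ℤ, (((Real.exp (-(k : ℝ) ^ 2 * π ^ 2 * t / 8)) : ℂ) *
          Complex.exp (((k : ℝ) * π * z / 2 : ℝ) * Complex.I)) := by
    rw [Complex.ofReal_tsum]
    apply mul_left_cancel₀ (Complex.exp_ne_zero ((z ^ 2 / (2 * t) : ℝ) : ℂ))
    rw [key]; ring
  have hs16 : Real.sqrt (8 / (π * t)) = 4 / Real.sqrt (2 * π * t) := by
    rw [show (8 : ℝ) / (π * t) = 16 / (2 * π * t) by field_simp; ring,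
      Real.sqrt_div (by norm_num : (0:ℝ) ≤ 16),
      show (16:ℝ) = 4 ^ 2 by norm_num, Real.sqrt_sq (by norm_num : (0:ℝ) ≤ 4)]
  have hcpow : (((8 / (π * t) : ℝ)) : ℂ) ^ (1/2 : ℂ) = ((Real.sqrt (8 / (π * t)) : ℝ) : ℂ) := by
    rw [show ((1/2 : ℂ)) = (((1/2 : ℝ)) : ℂ) by norm_num, ← Complex.ofReal_cpow ha0.le,
      ← Real.sqrt_eq_rpow]
  have hconst : 1 / ((((8 / (π * t) : ℝ)) : ℂ) ^ (1/2 : ℂ))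
      = ((Real.sqrt (2 * π * t) / 4 : ℝ) : ℂ) := by
    rw [hcpow, hs16]
    push_cast
    rw [one_div_div]
  rw [hconst] at key2
  have hek := summable_ek t ht
  have hsum1 : Summable fun k : ℤ => (((Real.exp (-(k : ℝ) ^ 2 * π ^ 2 * t / 8)) : ℂ) *
      Complex.exp (((k : ℝ) * π * z / 2 : ℝ) * Complex.I)) := by
    apply Summable.of_norm
    refine hek.congr fun k => ?_
    rw [norm_mul, Complex.norm_exp_ofReal_mul_I, mul_one, Complex.norm_real,
      Real.norm_eq_abs, abs_of_pos (Real.exp_pos _)]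
  have := congrArg Complex.re key2
  rw [Complex.ofReal_re, Complex.re_ofReal_mul, Complex.re_tsum hsum1] at this
  rw [this]
  congr 1
  refine tsum_congr fun k => ?_
  rw [Complex.re_ofReal_mul, Complex.exp_ofReal_mul_I_re]

set_option maxHeartbeats 1000000 in
/-- Spectral representation of the transition density of Brownian motion on `(-1,1)`
killed at both endpoints. -/
theorem killed_bm_spectral (t x y : ℝ) (ht : 0 < t) :
    (1 / (2 * Real.sqrt (2 * π * t))) *
      ∑' n : ℤ, (Real.exp (-(x - y + 4 * (n : ℝ)) ^ 2 / (2 * t)) -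
        Real.exp (-(x + y + 4 * (n : ℝ) + 2) ^ 2 / (2 * t)))
    = (1 / 2) *
        ∑' n : ℕ, Real.exp (-((n : ℝ) + 1) ^ 2 * π ^ 2 * t / 8) *
          Real.sin (((n : ℝ) + 1) * π * (x + 1) / 2) *
          Real.sin (((n : ℝ) + 1) * π * (y + 1) / 2) := by
  have hπt : (0:ℝ) < π * t := mul_pos Real.pi_pos ht
  have sg1 := summable_gauss t (x - y) ht
  have sg2 : Summable fun n : ℤ => Real.exp (-(x + y + 4 * (n : ℝ) + 2) ^ 2 / (2 * t)) :=
    (summable_gauss t (x + y + 2) ht).congr fun n => by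
      rw [show x + y + 2 + 4 * (n:ℝ) = x + y + 4 * (n:ℝ) + 2 by ring]
  rw [Summable.tsum_sub sg1 sg2]
  rw [show (∑' n : ℤ, Real.exp (-(x + y + 4 * (n : ℝ) + 2) ^ 2 / (2 * t)))
      = ∑' n : ℤ, Real.exp (-(x + y + 2 + 4 * (n : ℝ)) ^ 2 / (2 * t)) from
    tsum_congr fun n => by rw [show x + y + 2 + 4 * (n:ℝ) = x + y + 4 * (n:ℝ) + 2 by ring]]
  rw [poisson t (x - y) ht, poisson t (x + y + 2) ht]
  have hek := summable_ek t ht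
  have sc : ∀ z : ℝ, Summable fun k : ℤ =>
      Real.exp (-(k : ℝ) ^ 2 * π ^ 2 * t / 8) * Real.cos ((k : ℝ) * π * z / 2) := by
    intro z
    refine Summable.of_norm_bounded hek fun k => ?_
    rw [Real.norm_eq_abs, abs_mul, Real.abs_exp]
    nlinarith [Real.abs_cos_le_one ((k : ℝ) * π * z / 2), Real.exp_pos (-(k : ℝ) ^ 2 * π ^ 2 * t / 8),
      abs_nonneg (Real.cos ((k : ℝ) * π * z / 2))]
  have hsqrt : Real.sqrt (2 * π * t) ≠ 0 := by positivity
  rw [← mul_sub, ← Summable.tsum_sub (sc (x-y)) (sc (x+y+2))]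
  have hterm : ∀ k : ℤ, Real.exp (-(k : ℝ) ^ 2 * π ^ 2 * t / 8) * Real.cos ((k : ℝ) * π * (x-y) / 2)
      - Real.exp (-(k : ℝ) ^ 2 * π ^ 2 * t / 8) * Real.cos ((k : ℝ) * π * (x+y+2) / 2)
      = 2 * (Real.exp (-(k : ℝ) ^ 2 * π ^ 2 * t / 8) * Real.sin ((k : ℝ) * π * (x+1) / 2)
          * Real.sin ((k : ℝ) * π * (y+1) / 2)) := by
    intro k
    rw [← mul_sub, Real.cos_sub_cos,
      show ((k:ℝ) * π * (x-y) / 2 + (k:ℝ) * π * (x+y+2) / 2) / 2 = (k:ℝ) * π * (x+1) / 2 by ring,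
      show ((k:ℝ) * π * (x-y) / 2 - (k:ℝ) * π * (x+y+2) / 2) / 2 = -((k:ℝ) * π * (y+1) / 2) by ring,
      Real.sin_neg]
    ring
  rw [tsum_congr hterm, tsum_mul_left]
  have sgz : Summable fun k : ℤ => Real.exp (-(k : ℝ) ^ 2 * π ^ 2 * t / 8)
      * Real.sin ((k : ℝ) * π * (x+1) / 2) * Real.sin ((k : ℝ) * π * (y+1) / 2) := by
    refine Summable.of_norm_bounded hek fun k => ?_
    rw [Real.norm_eq_abs, abs_mul, abs_mul, Real.abs_exp]
    calc Real.exp (-(k : ℝ) ^ 2 * π ^ 2 * t / 8) * |Real.sin ((k : ℝ) * π * (x+1) / 2)|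
          * |Real.sin ((k : ℝ) * π * (y+1) / 2)|
        ≤ Real.exp (-(k : ℝ) ^ 2 * π ^ 2 * t / 8) * 1 * 1 := by
          gcongr
          · exact Real.abs_sin_le_one _
          · exact Real.abs_sin_le_one _
      _ = Real.exp (-(k : ℝ) ^ 2 * π ^ 2 * t / 8) := by ring
  have hflip : ∀ (u : ℝ), Real.exp (-(-u) ^ 2 * π ^ 2 * t / 8) * Real.sin ((-u) * π * (x+1) / 2)
      * Real.sin ((-u) * π * (y+1) / 2)
      = Real.exp (-u ^ 2 * π ^ 2 * t / 8) * Real.sin (u * π * (x+1) / 2) * Real.sin (u * π * (y+1) / 2) := by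
    intro u
    rw [show (-u) * π * (x+1) / 2 = -(u * π * (x+1) / 2) by ring,
      show (-u) * π * (y+1) / 2 = -(u * π * (y+1) / 2) by ring, Real.sin_neg, Real.sin_neg, neg_sq]
    ring
  rw [int_tsum_even (fun k : ℤ => Real.exp (-(k : ℝ) ^ 2 * π ^ 2 * t / 8)
      * Real.sin ((k : ℝ) * π * (x+1) / 2) * Real.sin ((k : ℝ) * π * (y+1) / 2)) sgz
    (by norm_num) (fun k => by simp only [Int.cast_neg]; exact hflip _)]
  rw [show (∑' n : ℕ, Real.exp (-((((n:ℤ)+1 : ℤ)) : ℝ) ^ 2 * π ^ 2 * t / 8)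
        * Real.sin (((((n:ℤ)+1 : ℤ)) : ℝ) * π * (x+1) / 2) * Real.sin (((((n:ℤ)+1 : ℤ)) : ℝ) * π * (y+1) / 2))
      = ∑' n : ℕ, Real.exp (-((n : ℝ) + 1) ^ 2 * π ^ 2 * t / 8) *
          Real.sin (((n : ℝ) + 1) * π * (x + 1) / 2) * Real.sin (((n : ℝ) + 1) * π * (y + 1) / 2) from
    tsum_congr fun n => by push_cast; ring_nf]
  field_simp
  rw [show (2:ℝ) ^ 2 = 4 by norm_num]
  refine congrArg ((4:ℝ) * ·) (tsum_congr fun n => ?_)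
  ring_nf
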